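/- For every positive integer m, the infinite series sum over i >= 1 of (-1)^(m(i-1)) / (L_{m(i-1)} * L_{m(i+1)}) converges to (1/(5 * F_{2m})) * (2Φ - L_{m+1}/L_m - 1/2), where Φ = (1+√5)/2. -/

import Mathlib

def lucas : ℕ → ℕ
  | 0 => 2
  | 1 => 1
  | n + 2 => lucas (n + 1) + lucas n

open Real Filter Finset

lemma lucas_add_fib : ∀ n, lucas n + Nat.fib n = 2 * Nat.fib (n + 1)
  | 0 => by simp [lucas]
  | 1 => by simp [lucas]
  | (n + 2) => by
    have h1 := lucas_add_fib n
    have h2 := lucas_add_fib (n + 1)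
    simp only [lucas, Nat.fib_add_two] at *
    omega

lemma lucas_pos : ∀ n, 0 < lucas n := by
  intro n
  have h1 := lucas_add_fib n
  have h2 : 0 < Nat.fib (n + 1) := Nat.fib_pos.2 (by omega)
  have h3 : Nat.fib n ≤ Nat.fib (n + 1) := Nat.fib_le_fib_succ
  omega

noncomputable def F (n : ℕ) : ℝ := (Nat.fib n : ℝ)
noncomputable def L (n : ℕ) : ℝ := (lucas n : ℝ)

lemma L_eq (n : ℕ) : L n = 2 * F (n + 1) - F n := by
  have := lucas_add_fib n
  unfold L F
  have : ((lucas n : ℝ) + Nat.fib n) = 2 * Nat.fib (n + 1) := by exact_mod_cast congrArg (Nat.cast : ℕ → ℝ) this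
  linarith

lemma L_pos (n : ℕ) : 0 < L n := by
  unfold L; exact_mod_cast lucas_pos n

lemma F_rec (n : ℕ) : F (n + 2) = F (n + 1) + F n := by
  unfold F; rw [Nat.fib_add_two]; push_cast; ring

lemma key_fib : ∀ n k : ℕ, F (n + k) * F (n + 1) - F (n + k + 1) * F n = (-1 : ℝ) ^ n * F k := by
  intro n
  induction n with
  | zero => intro k; simp [F]
  | succ n ih =>
    intro k
    have e1 : F (n + 2) = F (n + 1) + F n := F_rec n
    have e2 : F (n + k + 2) = F (n + k + 1) + F (n + k) := F_rec (n + k)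
    have r2 : n + 1 + k = n + k + 1 := by omega
    have r1 : n + 1 + 1 = n + 2 := by omega
    rw [r2, r1]
    have r3 : n + k + 1 + 1 = n + k + 2 := by omega
    rw [r3, e1, e2, pow_succ]
    linear_combination -ih k

lemma key_lucas (n k : ℕ) : F (n + 2 * k) * L n - F n * L (n + 2 * k)
    = 2 * (-1 : ℝ) ^ n * F (2 * k) := by
  rw [L_eq, L_eq]
  have h := key_fib n (2 * k)
  have r : n + 2 * k + 1 = n + (2 * k) + 1 := by ring
  linear_combination 2 * h

lemma L_binet (n : ℕ) : L n = goldenRatio ^ n + goldenConj ^ n := by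
  rw [L_eq]
  unfold F
  rw [Real.coe_fib_eq, Real.coe_fib_eq]
  have h5 : Real.sqrt 5 ≠ 0 := by positivity
  have hg : goldenRatio = (1 + Real.sqrt 5) / 2 := rfl
  have hc : goldenConj = (1 - Real.sqrt 5) / 2 := rfl
  have hsq : Real.sqrt 5 * Real.sqrt 5 = 5 := Real.mul_self_sqrt (by norm_num)
  rw [hg, hc]
  field_simp
  ring

theorem stmt_7 (m : ℕ) (hm : 0 < m) :
    HasSum (fun i : ℕ =>
      (-1 : ℝ) ^ (m * i) /
        ((lucas (m * i) : ℝ) * (lucas (m * (i + 2)) : ℝ)))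
      ((1 / (5 * (Nat.fib (2 * m) : ℝ))) *
        (2 * ((1 + Real.sqrt 5) / 2) - (lucas (m + 1) : ℝ) / (lucas m : ℝ) - 1 / 2)) := by
  show HasSum (fun i : ℕ => (-1 : ℝ) ^ (m * i) / (L (m * i) * L (m * (i + 2))))
      ((1 / (5 * F (2 * m))) *
        (2 * ((1 + Real.sqrt 5) / 2) - L (m + 1) / L m - 1 / 2))
  have hφ := one_lt_goldenRatio
  have h5pos : (0:ℝ) < Real.sqrt 5 := by positivity
  have hsq : Real.sqrt 5 * Real.sqrt 5 = 5 := Real.mul_self_sqrt (by norm_num)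
  have hF2m : (0:ℝ) < F (2 * m) := by
    unfold F; exact_mod_cast Nat.fib_pos.2 (by omega)
  set f : ℕ → ℝ := fun i => (-1:ℝ) ^ (m * i) / (L (m * i) * L (m * (i + 2))) with hfdef
  set v : ℕ → ℝ := fun i => F (m * i) / L (m * i) with hvdef
  -- summability
  have hLone : ∀ n, (1:ℝ) ≤ L n := by
    intro n; unfold L; exact_mod_cast lucas_pos n
  have hLbig : ∀ i, goldenRatio ^ i ≤ L (m * (i + 2)) := by
    intro i
    rw [L_binet]
    have h1 : goldenRatio ^ (i + 2) ≤ goldenRatio ^ (m * (i + 2)) := by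
      apply pow_le_pow_right₀ (by linarith)
      exact Nat.le_mul_of_pos_left _ hm
    have h2 : -1 ≤ goldenConj ^ (m * (i + 2)) := by
      have : |goldenConj ^ (m * (i + 2))| ≤ 1 := by
        rw [abs_pow]
        apply pow_le_one₀ (abs_nonneg _)
        rw [abs_le]; constructor
        · linarith [neg_one_lt_goldenConj]
        · linarith [goldenConj_neg]
      linarith [abs_le.1 this |>.1]
    have h3 : goldenRatio ^ (i + 2) = goldenRatio ^ i * goldenRatio ^ 2 := by ring
    have h4 : goldenRatio ^ 2 = goldenRatio + 1 := goldenRatio_sq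
    have h5 : (1:ℝ) ≤ goldenRatio ^ i := one_le_pow₀ (by linarith)
    nlinarith
  have hsummable : Summable f := by
    apply Summable.of_norm_bounded (g := fun i => (goldenRatio⁻¹) ^ i)
      (summable_geometric_of_lt_one (by positivity) (by
        rw [inv_lt_one_iff₀]; right; exact hφ))
    intro i
    have hp1 := L_pos (m * i)
    have hp2 := L_pos (m * (i + 2))
    have : ‖f i‖ = 1 / (L (m * i) * L (m * (i + 2))) := by
      rw [hfdef]
      simp only [Real.norm_eq_abs, abs_div, abs_pow, abs_neg, abs_one, one_pow]
      rw [abs_of_pos (mul_pos hp1 hp2)]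
    rw [this, inv_pow]
    rw [div_le_iff₀ (mul_pos hp1 hp2)]
    have h1 := hLbig i
    have h2 := hLone (m * i)
    have hgp : (0:ℝ) < goldenRatio ^ i := pow_pos goldenRatio_pos i
    have h3 : goldenRatio ^ i ≤ L (m * i) * L (m * (i + 2)) := by nlinarith
    calc (1:ℝ) = (goldenRatio ^ i)⁻¹ * goldenRatio ^ i := by field_simp
      _ ≤ (goldenRatio ^ i)⁻¹ * (L (m * i) * L (m * (i + 2))) :=
        mul_le_mul_of_nonneg_left h3 (by positivity)
  -- term identity
  have hterm : ∀ i, f i = (v (i + 2) - v i) / (2 * F (2 * m)) := by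
    intro i
    have r : m * (i + 2) = m * i + 2 * m := by ring
    have hk := key_lucas (m * i) m
    have hp1 := (L_pos (m * i)).ne'
    have hp2 := (L_pos (m * i + 2 * m)).ne'
    simp only [hfdef, hvdef, r]
    rw [div_sub_div _ _ hp2 hp1]
    have hk' : F (m * i + 2 * m) * L (m * i) - L (m * i + 2 * m) * F (m * i)
        = 2 * (-1 : ℝ) ^ (m * i) * F (2 * m) := by linarith
    rw [hk', div_div]
    rw [div_eq_div_iff (by positivity) (by positivity)]
    ring
  -- telescoping partial sums
  have hpartial : ∀ N, ∑ i ∈ range N, f i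
      = (v (N + 1) + v N - v 1 - v 0) / (2 * F (2 * m)) := by
    intro N
    have hs : ∑ i ∈ range N, (v (i + 2) - v i) = v (N + 1) + v N - v 1 - v 0 := by
      induction N with
      | zero => simp
      | succ n ih =>
        rw [Finset.sum_range_succ, ih]
        show _ = v (n + 2) + v (n + 1) - v 1 - v 0
        ring
    simp only [hterm]
    rw [← Finset.sum_div, hs]
  -- limit of F n / L n
  have hrabs : |goldenConj / goldenRatio| < 1 := by
    rw [abs_div, abs_of_pos goldenRatio_pos, div_lt_one goldenRatio_pos]
    have h1 : |goldenConj| < 1 := abs_lt.2 ⟨neg_one_lt_goldenConj, by linarith [goldenConj_neg]⟩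
    linarith
  have h0 : Tendsto (fun n : ℕ => (goldenConj / goldenRatio) ^ n) atTop (nhds 0) :=
    tendsto_pow_atTop_nhds_zero_of_abs_lt_one hrabs
  have hw : Tendsto (fun n : ℕ => F n / L n) atTop (nhds (1 / Real.sqrt 5)) := by
    have hlim : Tendsto (fun n : ℕ => (1 - (goldenConj / goldenRatio) ^ n)
        / (Real.sqrt 5 * (1 + (goldenConj / goldenRatio) ^ n))) atTop
        (nhds ((1 - 0) / (Real.sqrt 5 * (1 + 0)))) := by
      apply Tendsto.div
      · exact tendsto_const_nhds.sub h0
      · exact tendsto_const_nhds.mul (tendsto_const_nhds.add h0)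
      · rw [add_zero, mul_one]; exact h5pos.ne'
    have heq : ∀ n : ℕ, F n / L n = (1 - (goldenConj / goldenRatio) ^ n)
        / (Real.sqrt 5 * (1 + (goldenConj / goldenRatio) ^ n)) := by
      intro n
      rw [L_binet]
      unfold F
      rw [Real.coe_fib_eq, div_div, div_pow goldenConj goldenRatio]
      have hφn : (0:ℝ) < goldenRatio ^ n := pow_pos goldenRatio_pos n
      have hLp : (0:ℝ) < goldenRatio ^ n + goldenConj ^ n := by
        rw [← L_binet]; exact L_pos n
      have h1 : (0:ℝ) < Real.sqrt 5 * (goldenRatio ^ n + goldenConj ^ n) :=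
        mul_pos h5pos hLp
      have h2 : (1:ℝ) + goldenConj ^ n / goldenRatio ^ n
          = (goldenRatio ^ n + goldenConj ^ n) / goldenRatio ^ n := by field_simp
      have h3 : (0:ℝ) < Real.sqrt 5 * (1 + goldenConj ^ n / goldenRatio ^ n) := by
        rw [h2]; exact mul_pos h5pos (div_pos hLp hφn)
      rw [div_eq_div_iff h1.ne' h3.ne']
      field_simp
    rw [show (1 / Real.sqrt 5 : ℝ) = (1 - 0) / (Real.sqrt 5 * (1 + 0)) by norm_num]
    exact Tendsto.congr (fun n => (heq n).symm) hlim
  have hmono : StrictMono (fun N : ℕ => m * N) := fun a b h => (Nat.mul_lt_mul_left hm).mpr h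
  have hvlim : Tendsto v atTop (nhds (1 / Real.sqrt 5)) := hw.comp hmono.tendsto_atTop
  have hvlim1 : Tendsto (fun N => v (N + 1)) atTop (nhds (1 / Real.sqrt 5)) :=
    hvlim.comp (tendsto_add_atTop_nat 1)
  have hlimS : Tendsto (fun N => ∑ i ∈ range N, f i) atTop
      (nhds ((1 / Real.sqrt 5 + 1 / Real.sqrt 5 - v 1 - v 0) / (2 * F (2 * m)))) := by
    have h : Tendsto (fun N : ℕ => (v (N + 1) + v N - v 1 - v 0) / (2 * F (2 * m))) atTop
        (nhds ((1 / Real.sqrt 5 + 1 / Real.sqrt 5 - v 1 - v 0) / (2 * F (2 * m)))) :=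
      (((hvlim1.add hvlim).sub (tendsto_const_nhds (x := v 1))).sub
        (tendsto_const_nhds (x := v 0))).div_const (2 * F (2 * m))
    exact Tendsto.congr (fun N => (hpartial N).symm) h
  have htsum : HasSum f (∑' i, f i) := hsummable.hasSum
  have huniq : (∑' i, f i)
      = (1 / Real.sqrt 5 + 1 / Real.sqrt 5 - v 1 - v 0) / (2 * F (2 * m)) :=
    tendsto_nhds_unique htsum.tendsto_sum_nat hlimS
  have hfin : (1 / Real.sqrt 5 + 1 / Real.sqrt 5 - v 1 - v 0) / (2 * F (2 * m))
      = (1 / (5 * F (2 * m))) * (2 * ((1 + Real.sqrt 5) / 2) - L (m + 1) / L m - 1 / 2) := by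
    have hv0 : v 0 = 0 := by simp [hvdef, F]
    have hv1 : v 1 = F m / L m := by simp [hvdef]
    have hLm := L_pos m
    have e : F (m + 1 + 1) = F (m + 1) + F m := F_rec m
    have hfive : 5 * F m = 2 * L (m + 1) - L m := by
      rw [L_eq, L_eq, e]; ring
    rw [hv0, hv1]
    field_simp
    linear_combination (-2 * L m) * hsq
      + (-Real.sqrt 5) * hfive
  rw [huniq, hfin] at htsum
  exact htsum
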